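/- Let p, q ∈ ℂ with p ≠ q, and let τ : ℤ → ℤ → ℂ be nowhere zero. Assume that for all n, m ∈ ℤ the two 6-point equations hold: (p+q)·τ n (m+1) · τ (n+2) m + (p−q)·τ n m · τ (n+2) (m+1) = 2p·τ (n+1) m · τ (n+1) (m+1), and (p+q)·τ (n+1) m · τ n (m+2) − (p−q)·τ n m · τ (n+1) (m+2) = 2q·τ n (m+1) · τ (n+1) (m+1). Then for all n, m the 5-point equation holds: (p−q)²·τ n m · τ (n+2) (m+2) − (p+q)²·τ (n+2) m · τ n (m+2) + 4·p·q·(τ (n+1) (m+1))² = 0. -/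
import Mathlib


theorem six_point_implies_five_point (p q : ℂ) (hpq : p ≠ q)
    (τ : ℤ → ℤ → ℂ) (hτ : ∀ n m, τ n m ≠ 0)
    (h6a : ∀ n m : ℤ,
      (p + q) * τ n (m+1) * τ (n+2) m + (p - q) * τ n m * τ (n+2) (m+1)
        = 2 * p * τ (n+1) m * τ (n+1) (m+1))
    (h6b : ∀ n m : ℤ,
      (p + q) * τ (n+1) m * τ n (m+2) - (p - q) * τ n m * τ (n+1) (m+2)
        = 2 * q * τ n (m+1) * τ (n+1) (m+1)) :
    ∀ n m : ℤ,
      (p - q)^2 * τ n m * τ (n+2) (m+2) - (p + q)^2 * τ (n+2) m * τ n (m+2)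
        + 4 * p * q * (τ (n+1) (m+1))^2 = 0 := by
  intro n m
  have A := h6a n m
  have B1 := h6b n m
  have B2 := h6b (n+1) m
  have hn : n + 1 + 1 = n + 2 := by ring
  rw [hn] at B2
  have key : τ (n+1) m * ((p - q)^2 * τ n m * τ (n+2) (m+2)
      - (p + q)^2 * τ (n+2) m * τ n (m+2)
      + 4 * p * q * (τ (n+1) (m+1))^2) = 0 := by
    linear_combination (-(p - q) * τ n m) * B2 + (-(p + q) * τ (n+2) m) * B1
      - (2 * q * τ (n+1) (m+1)) * A
  exact (mul_eq_zero.mp key).resolve_left (hτ _ _)
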